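/- Let e: ℝⁿ → ℝⁿ, f: ℝⁿ×ℝᵐ → ℝⁿ, g: ℝⁿ×ℝᵐ → ℝᵖ, let P be an n×n symmetric positive-definite matrix, let T ∈ ℕ, and let data ũ: {0,…,T} → ℝᵐ, ỹ: {0,…,T} → ℝᵖ, x̃: {0,…,T+1} → ℝⁿ be given. Define ε(t) = e(x̃(t+1)) − f(x̃(t),ũ(t)), and for each t the robust identification error term E(t) = sup over x ∈ ℝⁿ of { |f(x,ũ(t)) − f(x̃(t),ũ(t)) − ε(t)|²_{P⁻¹} + |x − x̃(t)|²_P − 2(x − x̃(t))'(e(x) − e(x̃(t))) + |g(x,ũ(t)) − ỹ(t)|² }. Then Ĵ_L ≤ Σ_{t=0}^{T} E(t), where Ĵ_L is the supremum over all sequences z: {0,…,T+1} → ℝⁿ with z(0) = x̃(0) of Σ_{t=0}^{T} |g(z(t),ũ(t)) − ỹ(t)|² − Σ_{t=0}^{T−1} 2(z(t+1) − x̃(t+1))'(e(z(t+1)) − f(z(t),ũ(t))), provided 2(x−x̃(t))'(e(x)−e(x̃(t))) ≥ |x−x̃(t)|²_P for all x ∈ ℝⁿ and all t (so that the storage function V(x,t)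 = 2(x−x̃(t))'(e(x)−e(x̃(t))) − |x−x̃(t)|²_P is nonnegative). -/

import Mathlib

open Matrix

lemma psd_quad {n : ℕ} {M : Matrix (Fin n) (Fin n) ℝ} (hM : M.PosSemidef) (x : Fin n → ℝ) :
    0 ≤ x ⬝ᵥ (M *ᵥ x) := by
  have := hM.re_dotProduct_nonneg x
  simpa using this

lemma young {n : ℕ} {P : Matrix (Fin n) (Fin n) ℝ} (hP : P.PosDef) (a b : Fin n → ℝ) :
    2 * (a ⬝ᵥ b) ≤ a ⬝ᵥ (P *ᵥ a) + b ⬝ᵥ (P⁻¹ *ᵥ b) := by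
  have hPT : Pᵀ = P := by have h : P.IsSymm := by simpa using hP.isHermitian
                          exact h
  have hdet : IsUnit P.det := isUnit_iff_ne_zero.mpr hP.det_pos.ne'
  have hinv : P *ᵥ (P⁻¹ *ᵥ b) = b := by
    rw [Matrix.mulVec_mulVec, Matrix.mul_nonsing_inv _ hdet, Matrix.one_mulVec]
  have hsym : ∀ x : Fin n → ℝ, x ᵥ* P = P *ᵥ x := fun x => by
    rw [← hPT, Matrix.vecMul_transpose, hPT]
  have hA : (P⁻¹ *ᵥ b) ⬝ᵥ (P *ᵥ a) = b ⬝ᵥ a := by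
    rw [Matrix.dotProduct_mulVec, hsym, hinv]
  have hB : (P⁻¹ *ᵥ b) ⬝ᵥ b = b ⬝ᵥ (P⁻¹ *ᵥ b) := dotProduct_comm _ _
  have hC : a ⬝ᵥ b = b ⬝ᵥ a := dotProduct_comm _ _
  have h := psd_quad hP.posSemidef (a - P⁻¹ *ᵥ b)
  rw [sub_dotProduct, Matrix.mulVec_sub, dotProduct_sub, dotProduct_sub,
    hinv, hA, hB] at h
  linarith

lemma ecoe_sum (s : Finset ℕ) (f : ℕ → ℝ) :
    ((∑ i ∈ s, f i : ℝ) : EReal) = ∑ i ∈ s, ((f i : ℝ) : EReal) := by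
  induction s using Finset.cons_induction with
  | empty => simp
  | cons a s ha ih => rw [Finset.sum_cons, Finset.sum_cons, EReal.coe_add, ih]

/-- If the storage function
`V(x,t) = 2(x−x̃(t))'(e(x)−e(x̃(t))) − |x−x̃(t)|²_P` is nonnegative, then the
Lagrangian relaxation bound `Ĵ_L` is bounded above by the robust identification
error `Σ_{t=0}^{T} E(t)`, where `E(t)` is the supremum over `x` of
`|f(x,ũ(t)) − f(x̃(t),ũ(t)) − ε(t)|²_{P⁻¹} + |x − x̃(t)|²_P
 − 2(x − x̃(t))'(e(x) − e(x̃(t))) + |g(x,ũ(t)) − ỹ(t)|²`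
with `ε(t) = e(x̃(t+1)) − f(x̃(t),ũ(t))`. Suprema are taken in the extended reals. -/
theorem stmt8 {n m p : ℕ}
    (e : (Fin n → ℝ) → (Fin n → ℝ))
    (f : (Fin n → ℝ) → (Fin m → ℝ) → (Fin n → ℝ))
    (g : (Fin n → ℝ) → (Fin m → ℝ) → (Fin p → ℝ))
    (P : Matrix (Fin n) (Fin n) ℝ) (hP : P.PosDef)
    (T : ℕ) (u : ℕ → Fin m → ℝ) (y : ℕ → Fin p → ℝ) (xs : ℕ → Fin n → ℝ)
    (hV : ∀ (t : ℕ) (x : Fin n → ℝ),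
      (x - xs t) ⬝ᵥ (P *ᵥ (x - xs t)) ≤ 2 * ((x - xs t) ⬝ᵥ (e x - e (xs t)))) :
    (⨆ z : {z : ℕ → Fin n → ℝ // z 0 = xs 0},
        ((∑ t ∈ Finset.range (T + 1),
            (g (z.1 t) (u t) - y t) ⬝ᵥ (g (z.1 t) (u t) - y t)
          - ∑ t ∈ Finset.range T,
            2 * ((z.1 (t + 1) - xs (t + 1)) ⬝ᵥ
                  (e (z.1 (t + 1)) - f (z.1 t) (u t))) : ℝ) : EReal))
      ≤ ∑ t ∈ Finset.range (T + 1),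
          ⨆ x : Fin n → ℝ,
            (((f x (u t) - f (xs t) (u t) - (e (xs (t + 1)) - f (xs t) (u t))) ⬝ᵥ
                (P⁻¹ *ᵥ (f x (u t) - f (xs t) (u t) - (e (xs (t + 1)) - f (xs t) (u t))))
              + (x - xs t) ⬝ᵥ (P *ᵥ (x - xs t))
              - 2 * ((x - xs t) ⬝ᵥ (e x - e (xs t)))
              + (g x (u t) - y t) ⬝ᵥ (g x (u t) - y t) : ℝ) : EReal) := by
  set s : ℕ → (Fin n → ℝ) → ℝ := fun t x =>
    (f x (u t) - f (xs t) (u t) - (e (xs (t + 1)) - f (xs t) (u t))) ⬝ᵥ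
        (P⁻¹ *ᵥ (f x (u t) - f (xs t) (u t) - (e (xs (t + 1)) - f (xs t) (u t))))
      + (x - xs t) ⬝ᵥ (P *ᵥ (x - xs t))
      - 2 * ((x - xs t) ⬝ᵥ (e x - e (xs t)))
      + (g x (u t) - y t) ⬝ᵥ (g x (u t) - y t) with hs
  apply iSup_le
  rintro ⟨z, hz0⟩
  set V : ℕ → ℝ := fun t =>
    2 * ((z t - xs t) ⬝ᵥ (e (z t) - e (xs t))) - (z t - xs t) ⬝ᵥ (P *ᵥ (z t - xs t)) with hVdef
  have hVnn : ∀ t, 0 ≤ V t := fun t => by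
    have := hV t (z t); simp only [hVdef]; linarith
  have hV0 : V 0 = 0 := by simp [hVdef, hz0]
  set A : ℕ → ℝ := fun t => (g (z t) (u t) - y t) ⬝ᵥ (g (z t) (u t) - y t) with hA
  set B : ℕ → ℝ := fun t =>
    2 * ((z (t + 1) - xs (t + 1)) ⬝ᵥ (e (z (t + 1)) - f (z t) (u t))) with hB
  -- vector simplification
  have hw : ∀ t, f (z t) (u t) - f (xs t) (u t) - (e (xs (t + 1)) - f (xs t) (u t))
      = f (z t) (u t) - e (xs (t + 1)) := fun t => by abel
  -- key step
  have key : ∀ t, A t - B t ≤ s t (z t) + V t - V (t + 1) := by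
    intro t
    have hy := young hP (z (t + 1) - xs (t + 1)) (f (z t) (u t) - e (xs (t + 1)))
    have hdot : (z (t + 1) - xs (t + 1)) ⬝ᵥ (e (z (t + 1)) - f (z t) (u t))
        = (z (t + 1) - xs (t + 1)) ⬝ᵥ (e (z (t + 1)) - e (xs (t + 1)))
          - (z (t + 1) - xs (t + 1)) ⬝ᵥ (f (z t) (u t) - e (xs (t + 1))) := by
      rw [← dotProduct_sub]
      congr 1
      abel
    have hst : s t (z t) = (f (z t) (u t) - e (xs (t + 1))) ⬝ᵥ
          (P⁻¹ *ᵥ (f (z t) (u t) - e (xs (t + 1))))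
        + (z t - xs t) ⬝ᵥ (P *ᵥ (z t - xs t))
        - 2 * ((z t - xs t) ⬝ᵥ (e (z t) - e (xs t))) + A t := by
      rw [hs]; simp only [hw t]; rfl
    simp only [hB, hVdef]
    rw [hst, hdot]
    linarith
  have lastterm : A T ≤ s T (z T) + V T := by
    have hq : 0 ≤ (f (z T) (u T) - e (xs (T + 1))) ⬝ᵥ
        (P⁻¹ *ᵥ (f (z T) (u T) - e (xs (T + 1)))) := psd_quad hP.inv.posSemidef _
    have hst : s T (z T) = (f (z T) (u T) - e (xs (T + 1))) ⬝ᵥ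
          (P⁻¹ *ᵥ (f (z T) (u T) - e (xs (T + 1))))
        + (z T - xs T) ⬝ᵥ (P *ᵥ (z T - xs T))
        - 2 * ((z T - xs T) ⬝ᵥ (e (z T) - e (xs T))) + A T := by
      rw [hs]; simp only [hw T]; rfl
    rw [hst]
    simp only [hVdef]
    linarith [hq]
  -- real inequality
  have hsum1 : ∑ t ∈ Finset.range T, (A t - B t)
      ≤ ∑ t ∈ Finset.range T, (s t (z t) + V t - V (t + 1)) :=
    Finset.sum_le_sum fun t _ => key t
  have htel : ∑ t ∈ Finset.range T, (s t (z t) + V t - V (t + 1))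
      = ∑ t ∈ Finset.range T, s t (z t) + (V 0 - V T) := by
    rw [← Finset.sum_range_sub' V T, ← Finset.sum_add_distrib]
    exact Finset.sum_congr rfl fun t _ => by ring
  have hreal : ∑ t ∈ Finset.range (T + 1), A t - ∑ t ∈ Finset.range T, B t
      ≤ ∑ t ∈ Finset.range (T + 1), s t (z t) := by
    rw [Finset.sum_range_succ, Finset.sum_range_succ (fun t => s t (z t))]
    rw [htel, hV0, Finset.sum_sub_distrib] at hsum1
    linarith
  -- pass to EReal
  calc ((∑ t ∈ Finset.range (T + 1), A t - ∑ t ∈ Finset.range T, B t : ℝ) : EReal)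
      ≤ ((∑ t ∈ Finset.range (T + 1), s t (z t) : ℝ) : EReal) := EReal.coe_le_coe_iff.mpr hreal
    _ = ∑ t ∈ Finset.range (T + 1), ((s t (z t) : ℝ) : EReal) := ecoe_sum _ _
    _ ≤ ∑ t ∈ Finset.range (T + 1), ⨆ x : Fin n → ℝ, ((s t x : ℝ) : EReal) :=
        Finset.sum_le_sum fun t _ => le_iSup (fun x => ((s t x : ℝ) : EReal)) (z t)
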